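/- Let P be a rectifiable path in ℝ^d of length L that stays within distance r ≥ 1 of the origin, such that every point of the unit sphere is visible from some point of P with norm ≥ 1. Then L ≥ e^{d/(8r²)} − 1. -/

import Mathlib

open scoped RealInnerProductSpace

/-- Chernoff/Hoeffding bound: the number of sign vectors `σ ∈ {-1,1}^d` with
`∑ i, σ i * z i ≥ (7/8)√d` is at most `2^d exp(-(49 d)/(128 r²))` when `‖z‖ ≤ r`. -/
private lemma stmt8_chernoff (d : ℕ) (r : ℝ) (hr : 1 ≤ r)
    (z : EuclideanSpace ℝ (Fin d)) (hz : ‖z‖ ≤ r)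
    (F : Finset (Fin d → ℝ))
    (hFV : F ⊆ Fintype.piFinset fun _ : Fin d => ({-1, 1} : Finset ℝ))
    (hF : ∀ σ ∈ F, 7 / 8 * Real.sqrt d ≤ ∑ i, σ i * z i) :
    (F.card : ℝ) ≤ 2 ^ d * Real.exp (-((49 * d) / (128 * r ^ 2))) := by
  classical
  have hr0 : (0:ℝ) < r := lt_of_lt_of_le one_pos hr
  set s : ℝ := 7 / 8 * Real.sqrt d with hs
  have hs0 : 0 ≤ s := by positivity
  set lam : ℝ := s / r ^ 2 with hlam
  have hlam0 : 0 ≤ lam := by positivity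
  have expand : ∀ σ : Fin d → ℝ, Real.exp (lam * ((∑ i, σ i * z i) - s))
      = Real.exp (-(lam * s)) * ∏ i, Real.exp (lam * (σ i * z i)) := by
    intro σ
    rw [← Real.exp_sum, ← Real.exp_add, ← Finset.mul_sum]
    ring_nf
  have step1 : (F.card : ℝ) ≤ ∑ σ ∈ F, Real.exp (lam * ((∑ i, σ i * z i) - s)) := by
    rw [Finset.card_eq_sum_ones F]
    push_cast
    refine Finset.sum_le_sum fun σ hσ => ?_
    have h1 := hF σ hσ
    exact Real.one_le_exp (mul_nonneg hlam0 (by linarith))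
  have step2 : ∑ σ ∈ F, Real.exp (lam * ((∑ i, σ i * z i) - s))
      ≤ ∑ σ ∈ Fintype.piFinset (fun _ : Fin d => ({-1, 1} : Finset ℝ)),
          Real.exp (lam * ((∑ i, σ i * z i) - s)) :=
    Finset.sum_le_sum_of_subset_of_nonneg hFV (fun _ _ _ => (Real.exp_pos _).le)
  have step3 : ∑ σ ∈ Fintype.piFinset (fun _ : Fin d => ({-1, 1} : Finset ℝ)),
      Real.exp (lam * ((∑ i, σ i * z i) - s))
      = Real.exp (-(lam * s)) *
        ∏ i : Fin d, (Real.exp (lam * ((-1) * z i)) + Real.exp (lam * (1 * z i))) := by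
    simp_rw [expand]
    rw [← Finset.mul_sum]
    congr 1
    rw [Finset.sum_prod_piFinset (({-1, 1} : Finset ℝ)) (fun i x => Real.exp (lam * (x * z i)))]
    refine Finset.prod_congr rfl fun i _ => ?_
    rw [Finset.sum_pair (by norm_num : (-1 : ℝ) ≠ 1)]
  have factor_le : ∀ i : Fin d,
      Real.exp (lam * ((-1) * z i)) + Real.exp (lam * (1 * z i))
        ≤ 2 * Real.exp ((lam * z i) ^ 2 / 2) := by
    intro i
    have h := Real.cosh_le_exp_half_sq (lam * z i)
    rw [Real.cosh_eq] at h
    have e1 : lam * ((-1) * z i) = -(lam * z i) := by ring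
    have e2 : lam * (1 * z i) = lam * z i := by ring
    rw [e1, e2]
    linarith
  have prod_le : ∏ i : Fin d, (Real.exp (lam * ((-1) * z i)) + Real.exp (lam * (1 * z i)))
      ≤ ∏ i : Fin d, (2 * Real.exp ((lam * z i) ^ 2 / 2)) := by
    refine Finset.prod_le_prod (fun i _ => by positivity) fun i _ => factor_le i
  have prod_eq : ∏ i : Fin d, (2 * Real.exp ((lam * z i) ^ 2 / 2))
      = 2 ^ d * Real.exp (lam ^ 2 / 2 * ∑ i, z i ^ 2) := by
    rw [Finset.prod_mul_distrib, Finset.prod_const, Finset.card_univ, Fintype.card_fin,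
      ← Real.exp_sum]
    congr 2
    rw [Finset.mul_sum]
    exact Finset.sum_congr rfl fun i _ => by ring
  have hnorm : ∑ i, z i ^ 2 = ‖z‖ ^ 2 := by
    have h := EuclideanSpace.norm_eq z
    rw [h, Real.sq_sqrt (by positivity)]
    exact Finset.sum_congr rfl fun i _ => by rw [Real.norm_eq_abs, sq_abs]
  have hz2 : ‖z‖ ^ 2 ≤ r ^ 2 := by nlinarith [norm_nonneg z]
  have hss : s ^ 2 = 49 / 64 * d := by
    rw [hs, mul_pow, Real.sq_sqrt (Nat.cast_nonneg d)]
    norm_num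
  have hexpo : lam ^ 2 / 2 * ‖z‖ ^ 2 + -(lam * s) ≤ -((49 * d) / (128 * r ^ 2)) := by
    have h1 : lam ^ 2 / 2 * ‖z‖ ^ 2 ≤ lam ^ 2 / 2 * r ^ 2 := by nlinarith [sq_nonneg lam]
    have h2 : lam ^ 2 / 2 * r ^ 2 + -(lam * s) = -(s ^ 2 / (2 * r ^ 2)) := by
      rw [hlam]; field_simp; ring
    have h3 : -(s ^ 2 / (2 * r ^ 2)) = -((49 * d) / (128 * r ^ 2)) := by
      rw [hss]; ring
    linarith
  calc (F.card : ℝ)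
      ≤ ∑ σ ∈ Fintype.piFinset (fun _ : Fin d => ({-1, 1} : Finset ℝ)),
          Real.exp (lam * ((∑ i, σ i * z i) - s)) := le_trans step1 step2
    _ = Real.exp (-(lam * s)) *
        ∏ i : Fin d, (Real.exp (lam * ((-1) * z i)) + Real.exp (lam * (1 * z i))) := step3
    _ ≤ Real.exp (-(lam * s)) * (2 ^ d * Real.exp (lam ^ 2 / 2 * ∑ i, z i ^ 2)) := by
        rw [← prod_eq]
        exact mul_le_mul_of_nonneg_left prod_le (Real.exp_pos _).le
    _ = 2 ^ d * Real.exp (lam ^ 2 / 2 * ‖z‖ ^ 2 + -(lam * s)) := by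
        rw [hnorm, Real.exp_add]; ring
    _ ≤ 2 ^ d * Real.exp (-((49 * d) / (128 * r ^ 2))) := by
        have := Real.exp_le_exp.2 hexpo
        nlinarith [this, pow_pos (zero_lt_two (α := ℝ)) d]

private lemma stmt8_norm_q (d : ℕ) (hd : 1 ≤ d) (σ : Fin d → ℝ)
    (hσ : ∀ i, σ i = -1 ∨ σ i = 1) :
    ‖(WithLp.equiv 2 (Fin d → ℝ)).symm (fun i => σ i / Real.sqrt d)‖ = 1 := by
  have hd0 : (0:ℝ) < d := by exact_mod_cast hd
  rw [EuclideanSpace.norm_eq]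
  simp_rw [WithLp.equiv_symm_apply]
  have h1 : ∀ i : Fin d, ‖σ i / Real.sqrt d‖ ^ 2 = 1 / d := by
    intro i
    rw [Real.norm_eq_abs, sq_abs, div_pow, Real.sq_sqrt hd0.le]
    rcases hσ i with h | h <;> rw [h] <;> norm_num
  simp_rw [h1]
  rw [Finset.sum_const, Finset.card_univ, Fintype.card_fin, nsmul_eq_mul,
    mul_one_div, div_self (ne_of_gt hd0), Real.sqrt_one]

/-- If a 1-Lipschitz path `P : [0, L] → ℝ^d` stays within distance `r ≥ 1` of the
origin and every point of the unit sphere is visible from some point of `P` of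
norm `≥ 1`, then `L ≥ exp (d / (8 r^2)) - 1`. -/
theorem stmt8 (d : ℕ) (hd : 1 ≤ d) (L r : ℝ) (hL : 0 ≤ L) (hr : 1 ≤ r)
    (P : ℝ → EuclideanSpace ℝ (Fin d))
    (hlip : LipschitzOnWith 1 P (Set.Icc 0 L))
    (hbound : ∀ t ∈ Set.Icc (0 : ℝ) L, ‖P t‖ ≤ r)
    (hview : ∀ q : EuclideanSpace ℝ (Fin d), ‖q‖ = 1 →
      ∃ t ∈ Set.Icc (0 : ℝ) L, 1 ≤ ‖P t‖ ∧ 1 ≤ ⟪P t, q⟫) :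
    Real.exp ((d : ℝ) / (8 * r ^ 2)) - 1 ≤ L := by
  classical
  have hr0 : (0:ℝ) < r := lt_of_lt_of_le one_pos hr
  have hd0 : (0:ℝ) < d := by exact_mod_cast hd
  have hsd : (0:ℝ) < Real.sqrt d := Real.sqrt_pos.2 hd0
  -- Step 0: L ≥ 2, via antipodal points.
  have hL2 : 2 ≤ L := by
    have i : Fin d := ⟨0, hd⟩
    obtain ⟨t1, ht1, -, hq1⟩ := hview (EuclideanSpace.single i 1)
      (by rw [EuclideanSpace.norm_single]; norm_num)
    obtain ⟨t2, ht2, -, hq2⟩ := hview (-EuclideanSpace.single i 1)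
      (by rw [norm_neg, EuclideanSpace.norm_single]; norm_num)
    rw [inner_neg_right] at hq2
    have h2 : (2:ℝ) ≤ ⟪P t1 - P t2, EuclideanSpace.single i 1⟫ := by
      rw [inner_sub_left]; linarith
    have h3 : ⟪P t1 - P t2, EuclideanSpace.single i 1⟫ ≤ ‖P t1 - P t2‖ := by
      have h := real_inner_le_norm (P t1 - P t2) (EuclideanSpace.single i 1)
      rw [EuclideanSpace.norm_single] at h
      simpa using h
    have h4 : dist (P t1) (P t2) ≤ 1 * dist t1 t2 := hlip.dist_le_mul t1 ht1 t2 ht2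
    rw [dist_eq_norm] at h4
    have h5 : dist t1 t2 ≤ L := by
      rw [Real.dist_eq, abs_le]
      obtain ⟨a1, b1⟩ := ht1; obtain ⟨a2, b2⟩ := ht2
      constructor <;> linarith
    linarith
  set V := Fintype.piFinset fun _ : Fin d => ({-1, 1} : Finset ℝ) with hV
  have hmem : ∀ σ ∈ V, ∀ i, σ i = -1 ∨ σ i = 1 := by
    intro σ hσ i
    have := Fintype.mem_piFinset.1 hσ i
    simpa using this
  set q : (Fin d → ℝ) → EuclideanSpace ℝ (Fin d) := fun σ => (WithLp.equiv 2 (Fin d → ℝ)).symm (fun i => σ i / Real.sqrt d) with hq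
  have hqnorm : ∀ σ ∈ V, ‖q σ‖ = 1 := fun σ hσ => stmt8_norm_q d hd σ (hmem σ hσ)
  have hchoice : ∀ σ : Fin d → ℝ, ∃ u : ℝ, σ ∈ V →
      u ∈ Set.Icc (0:ℝ) L ∧ 1 ≤ ‖P u‖ ∧ 1 ≤ ⟪P u, q σ⟫ := by
    intro σ
    by_cases hσ : σ ∈ V
    · obtain ⟨u, hu, h1, h2⟩ := hview (q σ) (hqnorm σ hσ)
      exact ⟨u, fun _ => ⟨hu, h1, h2⟩⟩
    · exact ⟨0, fun h => absurd h hσ⟩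
  choose t ht using hchoice
  set N := ⌊8 * L⌋₊ + 1 with hN
  set a : ℝ := (49 * d) / (128 * r ^ 2) with ha
  -- bound on each fiber
  have fiber_bound : ∀ k ∈ Finset.range N,
      (((V.filter fun σ => ⌊8 * t σ⌋₊ = k).card : ℕ) : ℝ) ≤ 2 ^ d * Real.exp (-a) := by
    intro k _
    set F := V.filter fun σ => ⌊8 * t σ⌋₊ = k with hF
    rcases F.eq_empty_or_nonempty with h | ⟨σ₀, hσ₀⟩
    · rw [h]; simp; positivity
    · have hσ₀V : σ₀ ∈ V := (Finset.mem_filter.1 hσ₀).1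
      have hσ₀k : ⌊8 * t σ₀⌋₊ = k := (Finset.mem_filter.1 hσ₀).2
      obtain ⟨ht0mem, -, -⟩ := ht σ₀ hσ₀V
      have hzr : ‖P (t σ₀)‖ ≤ r := hbound _ ht0mem
      have key : ∀ σ ∈ F, 7 / 8 * Real.sqrt d ≤ ∑ i, σ i * (P (t σ₀)) i := by
        intro σ hσ
        have hσV : σ ∈ V := (Finset.mem_filter.1 hσ).1
        have hσk : ⌊8 * t σ⌋₊ = k := (Finset.mem_filter.1 hσ).2
        obtain ⟨htmem, -, hinner⟩ := ht σ hσV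
        have h0a : (0:ℝ) ≤ 8 * t σ := by
          have := htmem.1; linarith
        have h0b : (0:ℝ) ≤ 8 * t σ₀ := by
          have := ht0mem.1; linarith
        have h1a : (k:ℝ) ≤ 8 * t σ := by
          rw [← hσk]; exact Nat.floor_le h0a
        have h2a : 8 * t σ < k + 1 := by
          rw [← hσk]; push_cast; exact Nat.lt_floor_add_one _
        have h1b : (k:ℝ) ≤ 8 * t σ₀ := by
          rw [← hσ₀k]; exact Nat.floor_le h0b
        have h2b : 8 * t σ₀ < k + 1 := by
          rw [← hσ₀k]; push_cast; exact Nat.lt_floor_add_one _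
        have hdist : dist (t σ) (t σ₀) ≤ 1 / 8 := by
          rw [Real.dist_eq, abs_le]
          constructor <;> linarith
        have hPd : ‖P (t σ) - P (t σ₀)‖ ≤ 1 / 8 := by
          have h4 : dist (P (t σ)) (P (t σ₀)) ≤ 1 * dist (t σ) (t σ₀) :=
            hlip.dist_le_mul _ htmem _ ht0mem
          rw [dist_eq_norm] at h4
          linarith
        have hip : ⟪P (t σ) - P (t σ₀), q σ⟫ ≤ 1 / 8 := by
          have h := real_inner_le_norm (P (t σ) - P (t σ₀)) (q σ)
          rw [hqnorm σ hσV, mul_one] at h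
          linarith
        have hz78 : 7 / 8 ≤ ⟪P (t σ₀), q σ⟫ := by
          rw [inner_sub_left] at hip; linarith
        have hconv : ⟪P (t σ₀), q σ⟫ = (∑ i, σ i * (P (t σ₀)) i) / Real.sqrt d := by
          rw [PiLp.inner_apply, Finset.sum_div]
          refine Finset.sum_congr rfl fun i _ => ?_
          simp only [hq, WithLp.equiv_symm_apply, PiLp.toLp_apply, RCLike.inner_apply, conj_trivial]
          ring
        rw [hconv, le_div_iff₀ hsd] at hz78
        linarith
      have := stmt8_chernoff d r hr (P (t σ₀)) hzr F (Finset.filter_subset _ _) key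
      rw [ha]
      exact this
  have hcard : (V.card : ℝ) = 2 ^ d := by
    rw [hV, Fintype.card_piFinset]
    simp [Finset.card_pair (by norm_num : (-1:ℝ) ≠ 1)]
  have hsum : V.card = ∑ k ∈ Finset.range N, (V.filter fun σ => ⌊8 * t σ⌋₊ = k).card := by
    refine Finset.card_eq_sum_card_fiberwise ?_
    intro σ hσ
    simp only [Finset.coe_range, Set.mem_Iio, hN]
    have hb := (ht σ hσ).1.2
    have hfl : ⌊8 * t σ⌋₊ ≤ ⌊8 * L⌋₊ := Nat.floor_le_floor (by linarith)
    omega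
  have total : (2:ℝ) ^ d ≤ N * (2 ^ d * Real.exp (-a)) := by
    calc (2:ℝ) ^ d = (V.card : ℝ) := hcard.symm
      _ = ∑ k ∈ Finset.range N,
          (((V.filter fun σ => ⌊8 * t σ⌋₊ = k).card : ℕ) : ℝ) := by
          rw [hsum]; push_cast; rfl
      _ ≤ ∑ _k ∈ Finset.range N, (2 ^ d * Real.exp (-a)) := Finset.sum_le_sum fiber_bound
      _ = N * (2 ^ d * Real.exp (-a)) := by
          rw [Finset.sum_const, Finset.card_range, nsmul_eq_mul]
  have hexp_le : Real.exp a ≤ 8 * L + 1 := by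
    have h2 : (0:ℝ) < 2 ^ d := by positivity
    have total' : (2:ℝ) ^ d * 1 ≤ 2 ^ d * ((N:ℝ) * Real.exp (-a)) := by
      rw [mul_one]
      calc (2:ℝ) ^ d ≤ N * (2 ^ d * Real.exp (-a)) := total
        _ = 2 ^ d * ((N:ℝ) * Real.exp (-a)) := by ring
    have h1 : 1 ≤ (N:ℝ) * Real.exp (-a) := le_of_mul_le_mul_left total' h2
    rw [Real.exp_neg, ← div_eq_mul_inv, le_div_iff₀ (Real.exp_pos a), one_mul] at h1
    have hNle : (N:ℝ) ≤ 8 * L + 1 := by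
      rw [hN]
      push_cast
      have := Nat.floor_le (by linarith : (0:ℝ) ≤ 8 * L)
      linarith
    linarith
  -- final computation
  by_cases hcase : Real.exp ((d:ℝ) / (8 * r ^ 2)) ≤ 3
  · linarith
  · push_neg at hcase
    set x := Real.exp ((d:ℝ) / (128 * r ^ 2)) with hx
    have hrne : r ≠ 0 := ne_of_gt hr0
    have hx16 : x ^ 16 = Real.exp ((d:ℝ) / (8 * r ^ 2)) := by
      rw [hx, ← Real.exp_nat_mul]
      congr 1
      field_simp
      ring
    have hx49 : x ^ 49 = Real.exp a := by
      rw [hx, ha, ← Real.exp_nat_mul]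
      congr 1
      field_simp
      norm_num
    have hx1 : 1 ≤ x := Real.one_le_exp (by positivity)
    have h3 : 3 ≤ x ^ 16 := by rw [hx16]; linarith
    have h49 : x ^ 49 ≤ 8 * L + 1 := by rw [hx49]; exact hexp_le
    have h48 : x ^ 48 ≤ x ^ 49 := pow_le_pow_right₀ hx1 (by norm_num)
    have hy2 : 9 ≤ (x ^ 16) ^ 2 := by nlinarith [h3]
    have hcube : 9 * x ^ 16 ≤ (x ^ 16) ^ 3 := by
      nlinarith [mul_nonneg (by linarith : (0:ℝ) ≤ x ^ 16)
        (by linarith : (0:ℝ) ≤ (x ^ 16) ^ 2 - 9)]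
    have hpow : (x ^ 16) ^ 3 = x ^ 48 := by rw [← pow_mul]
    have hc' : 9 * x ^ 16 ≤ x ^ 48 := by rw [← hpow]; exact hcube
    rw [← hx16]
    linarith [hc', h48, h49, h3]
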